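/- With the same notation, for all strictly positive X and X', the auxiliary function satisfies G(X, X') ≥ F(X); that is, G is an upper bound for the α-divergence objective F. -/

import Mathlib

open Finset Real

lemma aux_convex (α : ℝ) (hα0 : α ≠ 0) (hα1 : α ≠ 1) (f : ℝ → ℝ)
    (hf : ∀ z : ℝ, f z = (1 / (α * (α - 1))) * (z ^ (1 - α) + (α - 1) * z - α)) :
    ConvexOn ℝ (Set.Ioi (0:ℝ)) f := by
  have hint : interior (Set.Ioi (0:ℝ)) = Set.Ioi 0 := interior_Ioi
  set c : ℝ := 1 / (α * (α - 1)) with hc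
  have hα1' : α - 1 ≠ 0 := sub_ne_zero.2 hα1
  have hc1 : c * (α * (α - 1)) = 1 := by rw [hc]; field_simp
  have hfe : f = fun z => c * (z ^ (1 - α) + (α - 1) * z - α) := funext hf
  have hd1 : ∀ x ∈ Set.Ioi (0:ℝ), HasDerivAt f (c * ((1 - α) * x ^ (-α) + (α - 1))) x := by
    intro x hx
    have hx0 : (x:ℝ) ≠ 0 := ne_of_gt hx
    have h1 : HasDerivAt (fun z : ℝ => z ^ (1 - α)) ((1 - α) * x ^ (1 - α - 1)) x :=
      Real.hasDerivAt_rpow_const (Or.inl hx0)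
    have h2 := ((h1.add ((hasDerivAt_id x).const_mul (α - 1))).sub_const α).const_mul c
    simp only [id_eq] at h2
    rw [show (1:ℝ) - α - 1 = -α by ring] at h2
    rw [hfe]
    exact h2.congr_deriv (by ring)
  have hd2 : ∀ x ∈ Set.Ioi (0:ℝ),
      HasDerivAt (fun x => c * ((1 - α) * x ^ (-α) + (α - 1))) (x ^ (-α - 1)) x := by
    intro x hx
    have hx0 : (x:ℝ) ≠ 0 := ne_of_gt hx
    have h1 : HasDerivAt (fun z : ℝ => z ^ (-α)) (-α * x ^ (-α - 1)) x :=
      Real.hasDerivAt_rpow_const (Or.inl hx0)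
    have h2 := ((h1.const_mul (1 - α)).add_const (α - 1)).const_mul c
    exact h2.congr_deriv (by linear_combination x ^ (-α - 1) * hc1)
  refine convexOn_of_hasDerivWithinAt2_nonneg (f' := fun x => c * ((1 - α) * x ^ (-α) + (α - 1)))
      (f'' := fun x => x ^ (-α - 1)) (convex_Ioi 0) ?_ ?_ ?_ ?_
  · intro x hx
    exact (hd1 x hx).continuousAt.continuousWithinAt
  · intro x hx
    rw [hint] at hx ⊢
    exact (hd1 x hx).hasDerivWithinAt
  · intro x hx
    rw [hint] at hx ⊢
    exact (hd2 x hx).hasDerivWithinAt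
  · intro x hx
    rw [hint] at hx
    have hx' : (0:ℝ) < x := hx
    positivity

theorem stmt_4 (I T J : ℕ) (hJ : 0 < J) (α : ℝ) (hα0 : α ≠ 0) (hα1 : α ≠ 1)
    (Y : Fin I → Fin T → ℝ) (A : Fin I → Fin J → ℝ) (X X' : Fin J → Fin T → ℝ)
    (hY : ∀ i t, 0 < Y i t) (hA : ∀ i j, 0 < A i j)
    (hX : ∀ j t, 0 < X j t) (hX' : ∀ j t, 0 < X' j t)
    (f : ℝ → ℝ)
    (hf : ∀ z : ℝ, f z = (1 / (α * (α - 1))) * (z ^ (1 - α) + (α - 1) * z - α)) :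
    (∑ i, ∑ t, Y i t * f ((∑ j, A i j * X j t) / Y i t))
      ≤
    ∑ i, ∑ t, ∑ j,
      Y i t * (A i j * X' j t / ∑ k, A i k * X' k t) *
        f (A i j * X j t / (Y i t * (A i j * X' j t / ∑ k, A i k * X' k t))) := by
  have hconv := aux_convex α hα0 hα1 f hf
  refine Finset.sum_le_sum fun i _ => Finset.sum_le_sum fun t _ => ?_
  set S : ℝ := ∑ k, A i k * X' k t with hS
  have hSpos : 0 < S := Finset.sum_pos (fun k _ => mul_pos (hA i k) (hX' k t)) (by
    simpa using Finset.univ_nonempty_iff.2 (Fin.pos_iff_nonempty.mp hJ))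
  set w : Fin J → ℝ := fun j => A i j * X' j t / S with hw
  have hwpos : ∀ j, 0 < w j := fun j => div_pos (mul_pos (hA i j) (hX' j t)) hSpos
  have hwsum : ∑ j, w j = 1 := by
    simp only [hw]
    rw [← Finset.sum_div, ← hS, div_self hSpos.ne']
  set p : Fin J → ℝ := fun j => A i j * X j t / (Y i t * w j) with hp
  have hppos : ∀ j, 0 < p j := fun j =>
    div_pos (mul_pos (hA i j) (hX j t)) (mul_pos (hY i t) (hwpos j))
  have hmean : ∑ j, w j • p j = (∑ j, A i j * X j t) / Y i t := by
    rw [Finset.sum_div]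
    refine Finset.sum_congr rfl fun j _ => ?_
    have key : ∀ a n y : ℝ, a ≠ 0 → y ≠ 0 → a * (n / (y * a)) = n / y := by
      intros a n y ha hy; field_simp
    exact key _ _ _ (hwpos j).ne' (hY i t).ne'
  have hjensen : f (∑ j, w j • p j) ≤ ∑ j, w j • f (p j) :=
    hconv.map_sum_le (fun j _ => (hwpos j).le) hwsum (fun j _ => hppos j)
  rw [hmean] at hjensen
  calc Y i t * f ((∑ j, A i j * X j t) / Y i t)
      ≤ Y i t * ∑ j, w j • f (p j) :=
        mul_le_mul_of_nonneg_left hjensen (hY i t).le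
    _ = ∑ j, Y i t * w j * f (p j) := by
        rw [Finset.mul_sum]
        exact Finset.sum_congr rfl fun j _ => by rw [smul_eq_mul, mul_assoc]
    _ = _ := Finset.sum_congr rfl fun j _ => rfl
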